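/- For integers 1 ≤ i ≤ n, the quantity J^{(i)}_0(α) := ∫₀^∞ (∂ log f^{(i)}_{α,β}(x)/∂α)² f^{(i)}_{α,β}(x) dx equals (β/α)² · i(n−i+1)/(n+2). -/

import Mathlib

open MeasureTheory Set intervalIntegral
set_option maxHeartbeats 1000000

/-- The Beta function `B(a,b) = ∫₀¹ x^(a-1) (1-x)^(b-1) dx`. -/
noncomputable def Beta (a b : ℝ) : ℝ := ∫ x in Ioo (0:ℝ) 1, x ^ (a-1) * (1-x) ^ (b-1)

/-- `c(i,n) = n! / ((n-i)! (i-1)!)`. -/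
noncomputable def cCoef (i n : ℕ) : ℝ :=
  (Nat.factorial n : ℝ) / ((Nat.factorial (n - i) : ℝ) * (Nat.factorial (i - 1) : ℝ))

/-- The density of the `i`-th order statistic of a log-logistic sample of size `n`. -/
noncomputable def fOrd (α β : ℝ) (n i : ℕ) (y : ℝ) : ℝ :=
  cCoef i n * β * (y/α) ^ ((i : ℝ) * β - 1) / (α * (1 + (y/α) ^ β) ^ (n + 1))

/-- The score of the `i`-th order statistic density with respect to `α`. -/
noncomputable def scoreAlpha (α β : ℝ) (n i : ℕ) (x : ℝ) : ℝ :=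
  β * ((n : ℝ) - i + 1) / α - ((n : ℝ) + 1) * β * α ^ (β - 1) / (α ^ β + x ^ β)

lemma betaNat (k m : ℕ) : ∫ u in (0:ℝ)..1, u^k * (1-u)^m
    = (Nat.factorial k * Nat.factorial m : ℝ) / Nat.factorial (k+m+1) := by
  induction m generalizing k with
  | zero =>
    simp only [pow_zero, mul_one, integral_pow, Nat.factorial_zero, Nat.cast_one,
      Nat.add_zero, Nat.factorial_succ]
    rw [one_pow, zero_pow (by omega)]
    field_simp
    push_cast
    ring
  | succ m ih =>
    have hF : ∀ u : ℝ, HasDerivAt (fun u : ℝ => u^(k+1) * (1-u)^(m+1))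
        ((k+1)*u^k*(1-u)^(m+1) - (m+1)*(u^(k+1)*(1-u)^m)) u := by
      intro u
      have h1 : HasDerivAt (fun u : ℝ => u^(k+1)) ((k+1)*u^k) u := by
        simpa using hasDerivAt_pow (k+1) u
      have h2 : HasDerivAt (fun u : ℝ => (1-u)^(m+1)) (-((m+1)*(1-u)^m)) u := by
        have := (hasDerivAt_pow (m+1) (1-u)).comp u
          ((hasDerivAt_const u (1:ℝ)).sub (hasDerivAt_id u))
        simpa [Function.comp_def] using this
      have := h1.mul h2
      refine this.congr_deriv ?_
      push_cast
      ring
    have key := intervalIntegral.integral_eq_sub_of_hasDerivAt (a := (0:ℝ)) (b := 1)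
      (fun u _ => hF u) (by apply Continuous.intervalIntegrable; continuity)
    simp only [one_pow, zero_pow (Nat.succ_ne_zero _), sub_self, sub_zero, zero_mul, mul_one,
      one_mul, mul_zero] at key
    have hsplit : ∫ u in (0:ℝ)..1,
        ((k+1:ℝ)*u^k*(1-u)^(m+1) - (m+1)*(u^(k+1)*(1-u)^m))
        = (k+1:ℝ) * (∫ u in (0:ℝ)..1, u^k*(1-u)^(m+1))
          - (m+1:ℝ) * (∫ u in (0:ℝ)..1, u^(k+1)*(1-u)^m) := by
      rw [intervalIntegral.integral_sub (by apply Continuous.intervalIntegrable; continuity)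
        (by apply Continuous.intervalIntegrable; continuity),
        intervalIntegral.integral_const_mul]
      simp_rw [mul_assoc]
      rw [intervalIntegral.integral_const_mul]
    rw [hsplit] at key
    have h2 := ih (k+1)
    have : (k+1:ℝ) * (∫ u in (0:ℝ)..1, u^k*(1-u)^(m+1))
        = (m+1:ℝ) * ((Nat.factorial (k+1) * Nat.factorial m : ℝ) / Nat.factorial (k+1+m+1)) := by
      rw [← h2]; linarith [key]
    have hk : (k+1:ℝ) ≠ 0 := by positivity
    field_simp at this ⊢
    rw [show k + (m+1) + 1 = k+1+m+1 by ring, Nat.factorial_succ (m)]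
    rw [Nat.factorial_succ k] at this
    push_cast at this ⊢
    apply mul_left_cancel₀ hk
    linear_combination this

lemma intIntAux (p q : ℕ) (c : ℝ) :
    IntervalIntegrable (fun x : ℝ => c * (x^p * (1-x)^q)) volume 0 1 :=
  (continuous_const.mul ((continuous_pow p).mul
    ((continuous_const.sub continuous_id).pow q))).intervalIntegrable 0 1

lemma splitAux (a b c : ℝ) (p q r s : ℕ) :
    ∫ u in Ioo (0:ℝ) 1, (a*(u^p*(1-u)^s) - b*(u^q*(1-u)^s) + c*(u^r*(1-u)^s))
    = a * ((Nat.factorial p * Nat.factorial s : ℝ)/Nat.factorial (p+s+1))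
      - b * ((Nat.factorial q * Nat.factorial s : ℝ)/Nat.factorial (q+s+1))
      + c * ((Nat.factorial r * Nat.factorial s : ℝ)/Nat.factorial (r+s+1)) := by
  rw [← MeasureTheory.integral_Ioc_eq_integral_Ioo,
    ← intervalIntegral.integral_of_le zero_le_one]
  rw [intervalIntegral.integral_add ((intIntAux _ _ _).sub (intIntAux _ _ _)) (intIntAux _ _ _),
    intervalIntegral.integral_sub (intIntAux _ _ _) (intIntAux _ _ _),
    intervalIntegral.integral_const_mul, intervalIntegral.integral_const_mul,
    intervalIntegral.integral_const_mul, betaNat, betaNat, betaNat]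

lemma betaIoo (k m : ℕ) : ∫ u in Ioo (0:ℝ) 1, u^k * (1-u)^m
    = (Nat.factorial k * Nat.factorial m : ℝ) / Nat.factorial (k+m+1) := by
  rw [← MeasureTheory.integral_Ioc_eq_integral_Ioo,
    ← intervalIntegral.integral_of_le zero_le_one]
  exact betaNat k m

theorem J_zero_alpha (α β : ℝ) (hα : 0 < α) (hβ : 0 < β)
    (n i : ℕ) (hi1 : 1 ≤ i) (hin : i ≤ n) :
    (∫ x in Ioi (0:ℝ), (scoreAlpha α β n i x) ^ 2 * fOrd α β n i x)
      = (β/α) ^ 2 * ((i : ℝ) * ((n : ℝ) - i + 1) / ((n : ℝ) + 2)) := by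
  set φ : ℝ → ℝ := fun u => α * (u/(1-u)) ^ (1/β) with hφ
  set φ' : ℝ → ℝ := fun u => α * ((1/β) * (u/(1-u)) ^ (1/β - 1) * (1/(1-u)^2)) with hφ'
  have hβ' : (1:ℝ)/β ≠ 0 := by positivity
  -- image
  have himg : φ '' Ioo 0 1 = Ioi 0 := by
    ext y
    constructor
    · rintro ⟨u, ⟨hu0, hu1⟩, rfl⟩
      have h1u : 0 < 1 - u := by linarith
      have : 0 < u/(1-u) := div_pos hu0 h1u
      exact mul_pos hα (Real.rpow_pos_of_pos this _)
    · intro hy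
      have hy0 : 0 < y := hy
      set t : ℝ := (y/α) ^ β with htdef
      have ht0 : 0 < t := Real.rpow_pos_of_pos (div_pos hy0 hα) _
      refine ⟨t/(1+t), ⟨div_pos ht0 (by linarith), ?_⟩, ?_⟩
      · rw [div_lt_one (by linarith)]; linarith
      · have h1 : 1 - t/(1+t) = 1/(1+t) := by field_simp; ring
        have h2 : t/(1+t) / (1 - t/(1+t)) = t := by rw [h1]; field_simp
        simp only [hφ, h2]
        rw [htdef, ← Real.rpow_mul (div_pos hy0 hα).le, mul_one_div_cancel hβ.ne',
          Real.rpow_one]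
        field_simp
  -- derivative
  have hderiv : ∀ u ∈ Ioo (0:ℝ) 1, HasDerivWithinAt φ (φ' u) (Ioo 0 1) u := by
    intro u ⟨hu0, hu1⟩
    have h1u : 0 < 1 - u := by linarith
    have hg : HasDerivAt (fun u : ℝ => u/(1-u)) (1/(1-u)^2) u := by
      have := (hasDerivAt_id u).div ((hasDerivAt_const u (1:ℝ)).sub (hasDerivAt_id u)) h1u.ne'
      refine this.congr_deriv ?_
      simp only [Pi.sub_apply, id_eq]
      ring
    have ht0 : (0:ℝ) < u/(1-u) := div_pos hu0 h1u
    have hr : HasDerivAt (fun x : ℝ => x ^ (1/β)) ((1/β) * (u/(1-u)) ^ (1/β - 1)) (u/(1-u)) :=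
      Real.hasDerivAt_rpow_const (Or.inl ht0.ne')
    have := (hr.comp u hg).const_mul α
    refine (this.congr_deriv ?_).hasDerivWithinAt
    simp only [hφ']
  -- injectivity
  have hinj : InjOn φ (Ioo 0 1) := by
    intro u ⟨hu0, hu1⟩ v ⟨hv0, hv1⟩ huv
    have h1u : 0 < 1 - u := by linarith
    have h1v : 0 < 1 - v := by linarith
    simp only [hφ] at huv
    have := mul_left_cancel₀ hα.ne' huv
    have h2 : u/(1-u) = v/(1-v) :=
      Real.rpow_left_injOn hβ' (le_of_lt (div_pos hu0 h1u)) (le_of_lt (div_pos hv0 h1v)) this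
    field_simp at h2
    nlinarith [h2]
  -- change of variables
  rw [← himg, integral_image_eq_integral_abs_deriv_smul measurableSet_Ioo hderiv hinj]
  -- pointwise simplification
  have hpt : ∀ u ∈ Ioo (0:ℝ) 1,
      |φ' u| • ((scoreAlpha α β n i (φ u)) ^ 2 * fOrd α β n i (φ u))
      = (β/α)^2 * cCoef i n *
        (((n:ℝ)+1)^2*(u^(i+1)*(1-u)^(n-i)) - 2*i*((n:ℝ)+1)*(u^i*(1-u)^(n-i))
          + (i:ℝ)^2*(u^(i-1)*(1-u)^(n-i))) := by
    obtain ⟨j, rfl⟩ : ∃ j, i = j+1 := ⟨i-1, by omega⟩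
    rintro u ⟨hu0, hu1⟩
    have h1u : 0 < 1 - u := by linarith
    have ht0 : (0:ℝ) < u/(1-u) := div_pos hu0 h1u
    have hrp0 : (0:ℝ) < (u/(1-u)) ^ (1/β) := Real.rpow_pos_of_pos ht0 _
    have hA : ((u/(1-u)) ^ (1/β)) ^ β = u/(1-u) := by
      rw [← Real.rpow_mul ht0.le, one_div_mul_cancel hβ.ne', Real.rpow_one]
    have hB : ((u/(1-u)) ^ (1/β)) ^ (((j:ℝ)+1)*β - 1)
        = (u/(1-u)) ^ (((j:ℝ)+1) - 1/β) := by
      rw [← Real.rpow_mul ht0.le]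
      congr 1
      field_simp
    have hxα : α * (u/(1-u))^(1/β) / α = (u/(1-u))^(1/β) :=
      mul_div_cancel_left₀ _ hα.ne'
    have hxβ : (α * (u/(1-u))^(1/β)) ^ β = α^β * (u/(1-u)) := by
      rw [Real.mul_rpow hα.le hrp0.le, hA]
    have hαβ : α ^ (β-1) = α^β / α := by rw [Real.rpow_sub hα, Real.rpow_one]
    have hαβ0 : (0:ℝ) < α ^ β := Real.rpow_pos_of_pos hα β
    have hscore : scoreAlpha α β n (j+1) (φ u) = (β/α) * (((n:ℝ)+1)*u - ((j:ℝ)+1)) := by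
      simp only [hφ, scoreAlpha, hxβ, hαβ]
      have hsum : α^β + α^β * (u/(1-u)) = α^β/(1-u) := by
        field_simp
        ring
      rw [hsum]
      push_cast
      field_simp
      ring
    have hford : fOrd α β n (j+1) (φ u)
        = cCoef (j+1) n * β * (u/(1-u))^(((j:ℝ)+1) - 1/β) * (1-u)^(n+1) / α := by
      simp only [hφ, fOrd, hxα]
      push_cast
      rw [hB, hA]
      have h1t : 1 + u/(1-u) = 1/(1-u) := by field_simp; ring
      rw [h1t, div_pow, one_pow]
      field_simp
    have hpφ' : 0 < φ' u := by
      simp only [hφ']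
      have h1 : (0:ℝ) < (u/(1-u))^(1/β - 1) := Real.rpow_pos_of_pos ht0 _
      have h2 : (0:ℝ) < 1/(1-u)^2 := by positivity
      have h3 : (0:ℝ) < 1/β := by positivity
      exact mul_pos hα (mul_pos (mul_pos h3 h1) h2)
    have hA0 : (0:ℝ) < (u/(1-u)) ^ (1/β - 1) := Real.rpow_pos_of_pos ht0 _
    have hABmul : (u/(1-u))^(1/β-1) * (u/(1-u))^(((j:ℝ)+1)-1/β) = u^j/(1-u)^j := by
      rw [← Real.rpow_add ht0, show 1/β - 1 + (((j:ℝ)+1)-1/β) = (j:ℝ) by ring,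
        Real.rpow_natCast, div_pow]
    have hBeq : (u/(1-u))^(((j:ℝ)+1)-1/β)
        = u^j/((1-u)^j * (u/(1-u))^(1/β-1)) := by
      rw [eq_div_iff (by positivity)]
      have hre : (u/(1-u))^(((j:ℝ)+1)-1/β) * ((1-u)^j * (u/(1-u))^(1/β-1))
          = ((u/(1-u))^(1/β-1) * (u/(1-u))^(((j:ℝ)+1)-1/β)) * (1-u)^j := by ring
      rw [hre, hABmul]
      exact div_mul_cancel₀ _ (by positivity)
    have hpow : (1-u)^(n+1) = (1-u)^(n-(j+1)) * ((1-u)^2 * (1-u)^j) := by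
      rw [← pow_add, ← pow_add]
      congr 1
      omega
    rw [smul_eq_mul, abs_of_pos hpφ', hscore, hford, hBeq, hpow]
    simp only [hφ', Nat.add_sub_cancel]
    push_cast
    field_simp
    ring
  rw [MeasureTheory.setIntegral_congr_fun measurableSet_Ioo hpt,
    MeasureTheory.integral_const_mul, splitAux]
  -- final arithmetic
  rw [mul_assoc]
  congr 1
  obtain ⟨j, rfl⟩ : ∃ j, i = j+1 := ⟨i-1, by omega⟩
  obtain ⟨k, rfl⟩ : ∃ k, n = j+1+k := ⟨n - (j+1), by omega⟩
  simp only [cCoef, show j+1+k-(j+1) = k by omega, show j+k+1-(j+1) = k by omega,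
    show j+1-1 = j by omega, show j+1+1 = j+2 by omega, show j+1+k = j+k+1 by omega,
    show j+2+k+1 = j+k+3 by omega, show j+1+k+1 = j+k+2 by omega,
    show j+1+1+k+1 = j+k+3 by omega]
  have f1 : ((j+k+2).factorial:ℝ) = (j+k+2)*(j+k+1).factorial := by
    rw [show j+k+2 = (j+k+1)+1 by omega, Nat.factorial_succ]; push_cast; ring
  have f2 : ((j+k+3).factorial:ℝ) = (j+k+3)*((j+k+2)*(j+k+1).factorial) := by
    rw [show j+k+3 = (j+k+2)+1 by omega, Nat.factorial_succ]; push_cast; rw [f1]; ring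
  have f3 : ((j+1).factorial:ℝ) = (j+1)*j.factorial := by
    rw [Nat.factorial_succ]; push_cast; ring
  have f4 : ((j+2).factorial:ℝ) = (j+2)*((j+1)*j.factorial) := by
    rw [show j+2 = (j+1)+1 by omega, Nat.factorial_succ]; push_cast; rw [f3]; ring
  rw [f1, f2, f3, f4]
  have hj : (j.factorial:ℝ) ≠ 0 := by positivity
  have hk : (k.factorial:ℝ) ≠ 0 := by positivity
  have hjk : ((j+k+1).factorial:ℝ) ≠ 0 := by positivity
  push_cast
  field_simp
  ring
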